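/- The min-max weighted latency walk problem restricted to metric graphs with all vertex weights equal to 1 is equivalent to the metric TSP: the optimal cost OPT_G equals the minimum TSP tour length; consequently the min-max latency walk problem is APX-hard. -/

import Mathlib

open scoped ENNReal BigOperators

/-- Total edge length of the segment of the infinite walk `W` from index `a` to `b`. -/
noncomputable def walkLen {V : Type*} (l : V → V → ℝ≥0∞) (W : ℕ → V) (a b : ℕ) : ℝ≥0∞ :=
  ∑ i ∈ Finset.Ico a b, l (W i) (W (i + 1))

/-- The walk visits every vertex infinitely often. -/
def VisitsInfOften {V : Type*} (W : ℕ → V) : Prop :=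
  ∀ v : V, ∀ N : ℕ, ∃ a : ℕ, N ≤ a ∧ W a = v

/-- Latency of vertex `v` on infinite walk `W`: the supremum, over visits to `v`,
of the length of the sub-walk until the next visit to `v`. -/
noncomputable def latency {V : Type*} (l : V → V → ℝ≥0∞) (W : ℕ → V) (v : V) : ℝ≥0∞ :=
  ⨆ (a : ℕ) (_ : W a = v), ⨅ (b : ℕ) (_ : a < b ∧ W b = v), walkLen l W a b

/-- Cost of an infinite walk: the maximum weighted latency over all vertices. -/
noncomputable def walkCost {V : Type*} (l : V → V → ℝ≥0∞) (φ : V → ℝ≥0∞) (W : ℕ → V) : ℝ≥0∞ :=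
  ⨆ v : V, φ v * latency l W v

/-- Optimal cost over all infinite walks (complete graph) visiting all vertices
infinitely often. -/
noncomputable def OPT {V : Type*} (l : V → V → ℝ≥0∞) (φ : V → ℝ≥0∞) : ℝ≥0∞ :=
  ⨅ (W : ℕ → V) (_ : VisitsInfOften W), walkCost l φ W

lemma walkLen_add {V : Type*} (l : V → V → ℝ≥0∞) (W : ℕ → V) {a b c : ℕ}
    (h1 : a ≤ b) (h2 : b ≤ c) : walkLen l W a c = walkLen l W a b + walkLen l W b c :=
  (Finset.sum_Ico_consecutive _ h1 h2).symm

lemma edist_le_walkLen {V : Type*} [PseudoEMetricSpace V] (W : ℕ → V) {a b : ℕ} (h : a ≤ b) :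
    edist (W a) (W b) ≤ walkLen (fun x y => edist x y) W a b := by
  induction b with
  | zero =>
    have : a = 0 := Nat.le_zero.mp h
    simp [this, walkLen]
  | succ k ih =>
    rcases Nat.lt_or_ge a (k+1) with hlt | hge
    · have hak : a ≤ k := Nat.lt_succ_iff.mp hlt
      calc edist (W a) (W (k+1)) ≤ edist (W a) (W k) + edist (W k) (W (k+1)) :=
            edist_triangle _ _ _
        _ ≤ walkLen (fun x y => edist x y) W a k + edist (W k) (W (k+1)) :=
            add_le_add (ih hak) le_rfl
        _ = walkLen (fun x y => edist x y) W a (k+1) := by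
            simp only [walkLen]; rw [Finset.sum_Ico_succ_top hak]
    · have : a = k+1 := le_antisymm h hge
      simp [this, walkLen]

lemma telescope {V : Type*} (l : V → V → ℝ≥0∞) (W : ℕ → V) (g : ℕ → ℕ) (hg : Monotone g)
    (m : ℕ) : ∑ i ∈ Finset.range m, walkLen l W (g i) (g (i+1)) = walkLen l W (g 0) (g m) := by
  induction m with
  | zero => simp [walkLen]
  | succ k ih =>
    rw [Finset.sum_range_succ, ih]
    simp only [walkLen]
    exact Finset.sum_Ico_consecutive _ (hg (Nat.zero_le k)) (hg (Nat.le_succ k))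

lemma exists_tour_le {V : Type*} [MetricSpace V] [Fintype V] (m : ℕ)
    (hm : Fintype.card V = m + 1) (W : ℕ → V) (s t : ℕ) (hst : s ≤ t) (hWst : W s = W t)
    (hall : ∀ v : V, ∃ k, s ≤ k ∧ k ≤ t ∧ W k = v) :
    ∃ e : Fin (m+1) ≃ V, ∑ i : Fin (m+1), edist (e i) (e (finRotate _ i))
      ≤ walkLen (fun a b => edist a b) W s t := by
  classical
  set f : V → ℕ := fun v => Nat.find (hall v) with hf
  have hfs : ∀ v, s ≤ f v := fun v => (Nat.find_spec (hall v)).1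
  have hft : ∀ v, f v ≤ t := fun v => (Nat.find_spec (hall v)).2.1
  have hWf : ∀ v, W (f v) = v := fun v => (Nat.find_spec (hall v)).2.2
  have finj : Function.Injective f := by
    intro u v huv
    rw [← hWf u, ← hWf v, huv]
  have hfWs : f (W s) = s :=
    le_antisymm (Nat.find_le ⟨le_refl s, hst, rfl⟩) (hfs (W s))
  set S : Finset ℕ := Finset.univ.image f with hS
  have hcard : S.card = m + 1 := by
    rw [hS, Finset.card_image_of_injective _ finj, Finset.card_univ, hm]
  set σ := S.orderIsoOfFin hcard with hσ
  have hmemS : ∀ x ∈ S, s ≤ x ∧ x ≤ t := by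
    intro x hx
    rw [hS, Finset.mem_image] at hx
    obtain ⟨v, -, rfl⟩ := hx
    exact ⟨hfs v, hft v⟩
  have hSrange : ∀ x, x ∈ S ↔ x ∈ Set.range f := by
    intro x
    simp [hS, Finset.mem_image, Set.mem_range, eq_comm]
  set e : Fin (m+1) ≃ V :=
    σ.toEquiv.trans ((Equiv.subtypeEquivRight hSrange).trans (Equiv.ofInjective f finj).symm)
    with he
  have hfe : ∀ i, f (e i) = (σ i : ℕ) := by
    intro i
    show f ((Equiv.ofInjective f finj).symm _) = _
    rw [Equiv.apply_ofInjective_symm finj]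
    rfl
  have hWe : ∀ i, W ((σ i : ℕ)) = e i := by
    intro i; rw [← hfe i, hWf]
  -- σ 0 = s
  have hsS : s ∈ S := by rw [← hfWs, hS]; exact Finset.mem_image_of_mem f (Finset.mem_univ _)
  have hσ0 : (σ 0 : ℕ) = s := by
    refine le_antisymm ?_ (hmemS _ (σ 0).2).1
    have : σ 0 ≤ σ (σ.symm ⟨s, hsS⟩) := σ.monotone (Fin.zero_le _)
    simp at this; exact this
  set g : ℕ → ℕ := fun i => if h : i < m + 1 then (σ ⟨i, h⟩ : ℕ) else t with hg
  have hσt : ∀ i : Fin (m+1), (σ i : ℕ) ≤ t := fun i => (hmemS _ (σ i).2).2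
  have hgmono : Monotone g := by
    intro i j hij
    simp only [hg]
    by_cases hi : i < m + 1
    · by_cases hj : j < m + 1
      · simp only [dif_pos hi, dif_pos hj]
        exact_mod_cast σ.monotone (show (⟨i, hi⟩ : Fin (m+1)) ≤ ⟨j, hj⟩ from hij)
      · simp only [dif_pos hi, dif_neg hj]
        exact hσt _
    · have hj : ¬ j < m + 1 := fun h => hi (lt_of_le_of_lt hij h)
      simp only [dif_neg hi, dif_neg hj, le_refl]
  have hg0 : g 0 = s := by simp only [hg, dif_pos (Nat.succ_pos m)]; exact hσ0
  have hgm : g (m+1) = t := by simp [hg]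
  refine ⟨e, ?_⟩
  have hterm : ∀ i : Fin (m+1),
      edist (e i) (e (finRotate _ i)) ≤ walkLen (fun a b => edist a b) W (g i.val) (g (i.val+1)) := by
    intro i
    have hgi : g i.val = (σ i : ℕ) := by
      simp only [hg, dif_pos i.isLt, Fin.eta]
    rcases Nat.lt_or_ge i.val m with hi | hi
    · -- not the last index
      have hrot : finRotate (m+1) i = i + 1 := finRotate_succ_apply i
      have hval : (i + 1 : Fin (m+1)).val = i.val + 1 :=
        Fin.val_add_one_of_lt (by rwa [Fin.lt_iff_val_lt_val, Fin.val_last])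
      have hgi1 : g (i.val + 1) = (σ (i+1) : ℕ) := by
        have h1 : i.val + 1 < m + 1 := Nat.succ_lt_succ hi
        simp only [hg, dif_pos h1]
        congr 1
        exact congrArg σ (Fin.ext hval.symm)
      rw [hrot, hgi, hgi1, ← hWe i, ← hWe (i+1)]
      apply edist_le_walkLen
      have : i ≤ i + 1 := by
        rw [Fin.le_iff_val_le_val, hval]; exact Nat.le_succ _
      exact_mod_cast σ.monotone this
    · -- last index
      have hilast : i = Fin.last m := Fin.ext (le_antisymm (Nat.lt_succ_iff.mp i.isLt) hi)
      have hival : i.val = m := by rw [hilast]; rfl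
      have hrot : finRotate (m+1) i = 0 := by
        rw [hilast, finRotate_succ_apply]
        simp
      have hgi1 : g (i.val + 1) = t := by rw [hival]; exact hgm
      rw [hrot, hgi, hgi1, ← hWe i, ← hWe 0, hσ0, hWst]
      exact edist_le_walkLen W (hσt i)
  calc ∑ i : Fin (m+1), edist (e i) (e (finRotate _ i))
      ≤ ∑ i : Fin (m+1), walkLen (fun a b => edist a b) W (g i.val) (g (i.val+1)) :=
        Finset.sum_le_sum fun i _ => hterm i
    _ = ∑ i ∈ Finset.range (m+1), walkLen (fun a b => edist a b) W (g i) (g (i+1)) :=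
        Fin.sum_univ_eq_sum_range (fun i => walkLen (fun a b => edist a b) W (g i) (g (i+1))) (m+1)
    _ = walkLen (fun a b => edist a b) W (g 0) (g (m+1)) := telescope _ _ g hgmono _
    _ = walkLen (fun a b => edist a b) W s t := by rw [hg0, hgm]

open Fin.NatCast

set_option maxHeartbeats 1000000 in
/-- The min-max weighted latency walk problem on metric graphs with all vertex weights 1
is equivalent to the metric TSP: the optimal cost equals the minimum TSP tour length. -/
theorem unit_weight_min_max_latency_eq_metric_TSP {V : Type*} [MetricSpace V] [Fintype V]
    [Nonempty V] :
    OPT (fun a b => edist a b) (fun _ : V => (1 : ℝ≥0∞)) =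
      ⨅ e : Fin (Fintype.card V) ≃ V,
        ∑ i : Fin (Fintype.card V), edist (e i) (e (finRotate _ i)) := by
  classical
  obtain ⟨m, hm⟩ : ∃ m, Fintype.card V = m + 1 :=
    Nat.exists_eq_succ_of_ne_zero Fintype.card_ne_zero
  rw [hm]
  apply le_antisymm
  · -- OPT ≤ min tour
    apply le_iInf
    intro e
    set W : ℕ → V := fun k => e ((k : Fin (m+1))) with hWdef
    have hWper : ∀ k : ℕ, W (k + (m+1)) = W k := by
      intro k
      show e _ = e _
      congr 1
      push_cast
      simp [Fin.natCast_self]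
    have hvio : VisitsInfOften W := by
      intro v N
      refine ⟨N * (m+1) + (e.symm v).val, ?_, ?_⟩
      · calc N ≤ N * (m+1) := Nat.le_mul_of_pos_right N (Nat.succ_pos m)
          _ ≤ N * (m+1) + (e.symm v).val := Nat.le_add_right _ _
      · show e _ = v
        have : ((N * (m+1) + (e.symm v).val : ℕ) : Fin (m+1)) = e.symm v := by
          push_cast
          simp [Fin.natCast_self, Fin.cast_val_eq_self]
        rw [this, Equiv.apply_symm_apply]
    have hkey : ∀ a : ℕ, walkLen (fun x y => edist x y) W a (a + (m+1))
        = ∑ i : Fin (m+1), edist (e i) (e (finRotate _ i)) := by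
      intro a
      have h1 : walkLen (fun x y => edist x y) W a (a + (m+1))
          = ∑ i ∈ Finset.range (m+1), edist (W (a+i)) (W (a+i+1)) := by
        simp only [walkLen]
        rw [Finset.sum_Ico_eq_sum_range, Nat.add_sub_cancel_left]
      rw [h1, ← Fin.sum_univ_eq_sum_range (fun i => edist (W (a+i)) (W (a+i+1))) (m+1)]
      have c1 : ∀ i : Fin (m+1), ((a + i.val : ℕ) : Fin (m+1)) = (a : Fin (m+1)) + i := by
        intro i
        rw [Nat.cast_add, Fin.cast_val_eq_self]
      have c2 : ∀ i : Fin (m+1), ((a + i.val + 1 : ℕ) : Fin (m+1)) = (a : Fin (m+1)) + i + 1 := by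
        intro i
        rw [Nat.cast_add, c1, Nat.cast_one]
      calc ∑ i : Fin (m+1), edist (W (a+i.val)) (W (a+i.val+1))
          = ∑ i : Fin (m+1), edist (e ((a : Fin (m+1)) + i)) (e ((a : Fin (m+1)) + i + 1)) :=
            Finset.sum_congr rfl fun i _ => by
              show edist (e _) (e _) = _
              rw [c1 i, c2 i]
        _ = ∑ j : Fin (m+1), edist (e j) (e (j + 1)) :=
            Equiv.sum_comp (Equiv.addLeft ((a : Fin (m+1)))) (fun j => edist (e j) (e (j+1)))
        _ = ∑ i : Fin (m+1), edist (e i) (e (finRotate _ i)) := by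
            simp [finRotate_succ_apply]
    have hcost : walkCost (fun a b => edist a b) (fun _ : V => (1:ℝ≥0∞)) W
        ≤ ∑ i : Fin (m+1), edist (e i) (e (finRotate _ i)) := by
      simp only [walkCost, one_mul]
      apply iSup_le
      intro v
      apply iSup₂_le
      intro a ha
      have hWv : W (a + (m+1)) = v := by rw [hWper]; exact ha
      exact le_trans (iInf₂_le (a + (m+1)) ⟨Nat.lt_add_of_pos_right (Nat.succ_pos m), hWv⟩)
        (le_of_eq (hkey a))
    exact le_trans (iInf₂_le W hvio) hcost
  · -- min tour ≤ OPT
    apply le_iInf₂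
    intro W hWio
    have hex : ∀ v : V, ∃ k, W k = v := fun v => (hWio v 0).imp fun a h => h.2
    set a : ℕ := (Finset.univ.sup fun v : V => Nat.find (hex v)) + 1 with hadef
    have hFa : ∀ v : V, Nat.find (hex v) < a := by
      intro v
      have : Nat.find (hex v) ≤ Finset.univ.sup fun v : V => Nat.find (hex v) :=
        Finset.le_sup (f := fun v : V => Nat.find (hex v)) (Finset.mem_univ v)
      omega
    set b : V → ℕ := fun v => Nat.find (hWio v a) with hbdef
    have hab : ∀ v, a ≤ b v := fun v => (Nat.find_spec (hWio v a)).1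
    have hWb : ∀ v, W (b v) = v := fun v => (Nat.find_spec (hWio v a)).2
    obtain ⟨u, -, hu⟩ := Finset.exists_max_image Finset.univ b ⟨Classical.arbitrary V,
      Finset.mem_univ _⟩
    have hu' : ∀ v : V, b v ≤ b u := fun v => hu v (Finset.mem_univ v)
    set B : ℕ := b u with hBdef
    have haB : a ≤ B := hab u
    have hBpos : 1 ≤ B := le_trans (by omega) haB
    set a' : ℕ := Nat.findGreatest (fun k => W k = u) (B - 1) with ha'def
    have hFuB : Nat.find (hex u) ≤ B - 1 := by
      have := hFa u; omega
    have ha'W : W a' = u := Nat.findGreatest_spec (P := fun k => W k = u) hFuB (Nat.find_spec (hex u))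
    have ha'B : a' < B := by
      have : a' ≤ B - 1 := Nat.findGreatest_le (P := fun k => W k = u) _
      omega
    have ha'a : a' < a := by
      by_contra hcon
      push_neg at hcon
      exact Nat.find_min (hWio u a) ha'B ⟨hcon, ha'W⟩
    have hnov : ∀ k, a' < k → k < B → W k ≠ u := by
      intro k h1 h2
      exact Nat.findGreatest_is_greatest (P := fun k => W k = u) h1 (by omega)
    have hall : ∀ v : V, ∃ k, a' ≤ k ∧ k ≤ B ∧ W k = v := by
      intro v
      exact ⟨b v, le_trans (le_of_lt ha'a) (hab v), hu' v, hWb v⟩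
    have hWa'B : W a' = W B := by rw [ha'W, hWb]
    obtain ⟨e, he⟩ := exists_tour_le m hm W a' B (le_of_lt ha'B) hWa'B hall
    have h2 : walkLen (fun x y : V => edist x y) W a' B
        ≤ ⨅ (c : ℕ) (_ : a' < c ∧ W c = u), walkLen (fun a b : V => edist a b) W a' c := by
      apply le_iInf₂
      intro c hc
      have hBc : B ≤ c := by
        by_contra hcon
        push_neg at hcon
        exact hnov c hc.1 hcon hc.2
      rw [walkLen_add _ W (le_of_lt ha'B) hBc]
      exact le_self_add
    have h3 : (⨅ (c : ℕ) (_ : a' < c ∧ W c = u), walkLen (fun a b : V => edist a b) W a' c)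
        ≤ latency (fun a b : V => edist a b) W u :=
      le_iSup₂ (f := fun (x : ℕ) (_ : W x = u) =>
        ⨅ (c : ℕ) (_ : x < c ∧ W c = u), walkLen (fun a b : V => edist a b) W x c) a' ha'W
    have h4 : latency (fun a b : V => edist a b) W u
        ≤ walkCost (fun a b => edist a b) (fun _ : V => (1:ℝ≥0∞)) W := by
      have := le_iSup (fun v : V => (1:ℝ≥0∞) * latency (fun a b : V => edist a b) W v) u
      simpa [walkCost, one_mul] using this
    calc (⨅ e' : Fin (m+1) ≃ V, ∑ i : Fin (m+1), edist (e' i) (e' (finRotate _ i)))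
        ≤ ∑ i : Fin (m+1), edist (e i) (e (finRotate _ i)) := iInf_le _ e
      _ ≤ walkLen (fun a b => edist a b) W a' B := he
      _ ≤ _ := le_trans (le_trans h2 h3) h4
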